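/- For a group G, the natural map Ab(G^ℕ) → Ab(G)^ℕ is an isomorphism if and only if the commutator width of G is finite. -/

import Mathlib

open scoped commutatorElement in
/-- The commutator length of `x`: the least `k` such that `x` is a product of `k`
commutators (junk value via `sInf` if `x` is not in the commutator subgroup). -/
noncomputable def commLength {G : Type} [Group G] (x : G) : ℕ :=
  sInf {k : ℕ | ∃ a b : Fin k → G, x = (List.ofFn (fun i => ⁅a i, b i⁆)).prod}

/-- The coordinatewise abelianization map on a countable power. -/
def powAbHom (G : Type) [Group G] : (ℕ → G) →* (ℕ → Abelianization G) :=
  MonoidHom.mk' (fun x n => Abelianization.of (x n)) (by intro a b; funext n; simp)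

/-- The natural map `Ab(G^ℕ) → Ab(G)^ℕ`. -/
def abPowToPowAb (G : Type) [Group G] :
    Abelianization (ℕ → G) →* (ℕ → Abelianization G) :=
  Abelianization.lift (powAbHom G)

open scoped commutatorElement


section Aux
variable {G : Type} [Group G]

/-- list form of "product of k commutators" -/
lemma list_eq_ofFn (l : List G) (hl : ∀ e ∈ l, ∃ a b : G, e = ⁅a, b⁆) :
    ∃ a b : Fin l.length → G, l = List.ofFn (fun i => ⁅a i, b i⁆) := by
  induction l with
  | nil => exact ⟨Fin.elim0, Fin.elim0, by simp⟩
  | cons e l ih =>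
    obtain ⟨a0, b0, rfl⟩ := hl e (by simp)
    obtain ⟨a, b, hab⟩ := ih (fun e he => hl e (by simp [he]))
    refine ⟨Fin.cons a0 a, Fin.cons b0 b, ?_⟩
    simp only [List.length_cons, List.ofFn_succ, Fin.cons_zero, Fin.cons_succ,
      List.cons.injEq]
    exact ⟨trivial, hab⟩

lemma prodComm_iff_list (x : G) (k : ℕ) :
    (∃ a b : Fin k → G, x = (List.ofFn (fun i => ⁅a i, b i⁆)).prod) ↔
    ∃ l : List G, l.length = k ∧ (∀ e ∈ l, ∃ a b : G, e = ⁅a, b⁆) ∧ x = l.prod := by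
  constructor
  · rintro ⟨a, b, rfl⟩
    refine ⟨_, by simp, ?_, rfl⟩
    intro e he
    rw [List.mem_ofFn] at he
    obtain ⟨i, rfl⟩ := he
    exact ⟨a i, b i, rfl⟩
  · rintro ⟨l, rfl, hl, rfl⟩
    obtain ⟨a, b, hab⟩ := list_eq_ofFn l hl
    exact ⟨a, b, by rw [← hab]⟩

lemma mem_commutator_iff_exists (x : G) :
    x ∈ commutator G ↔
    ∃ k, ∃ a b : Fin k → G, x = (List.ofFn (fun i => ⁅a i, b i⁆)).prod := by
  constructor
  · intro hx
    rw [commutator_eq_closure] at hx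
    induction hx using Subgroup.closure_induction with
    | mem y hy =>
      obtain ⟨a, b, rfl⟩ := hy
      exact ⟨1, fun _ => a, fun _ => b, by simp⟩
    | one => exact ⟨0, Fin.elim0, Fin.elim0, by simp⟩
    | mul y z _ _ hy hz =>
      obtain ⟨k1, hy⟩ := hy
      obtain ⟨k2, hz⟩ := hz
      rw [prodComm_iff_list] at hy hz
      obtain ⟨l1, rfl, h1, rfl⟩ := hy
      obtain ⟨l2, rfl, h2, rfl⟩ := hz
      rw [← List.prod_append]
      refine ⟨_, (prodComm_iff_list _ _).mpr ⟨l1 ++ l2, rfl, ?_, rfl⟩⟩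
      intro e he
      rcases List.mem_append.mp he with h | h
      · exact h1 e h
      · exact h2 e h
    | inv y _ hy =>
      obtain ⟨k1, hy⟩ := hy
      rw [prodComm_iff_list] at hy
      obtain ⟨l, rfl, h1, rfl⟩ := hy
      rw [List.prod_inv_reverse]
      refine ⟨_, (prodComm_iff_list _ _).mpr ⟨_, rfl, ?_, rfl⟩⟩
      intro e he
      rw [List.mem_reverse, List.mem_map] at he
      obtain ⟨f, hf, rfl⟩ := he
      obtain ⟨a, b, rfl⟩ := h1 f hf
      exact ⟨b, a, commutatorElement_inv a b⟩
  · rintro ⟨k, a, b, rfl⟩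
    apply Subgroup.list_prod_mem
    intro e he
    rw [List.mem_ofFn] at he
    obtain ⟨i, rfl⟩ := he
    exact Subgroup.commutator_mem_commutator (Subgroup.mem_top _) (Subgroup.mem_top _)

/-- padding -/
lemma prodComm_mono (x : G) {k B : ℕ} (hkB : k ≤ B)
    (h : ∃ a b : Fin k → G, x = (List.ofFn (fun i => ⁅a i, b i⁆)).prod) :
    ∃ a b : Fin B → G, x = (List.ofFn (fun i => ⁅a i, b i⁆)).prod := by
  rw [prodComm_iff_list] at h ⊢
  obtain ⟨l, rfl, h1, rfl⟩ := h
  refine ⟨l ++ List.replicate (B - l.length) ⁅(1 : G), (1 : G)⁆,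
    by simp [Nat.add_sub_cancel' hkB], ?_, ?_⟩
  · intro e he
    rcases List.mem_append.mp he with h | h
    · exact h1 e h
    · exact ⟨1, 1, List.eq_of_mem_replicate h⟩
  · simp

end Aux

section Main
variable {G : Type} [Group G]

lemma of_eq_one_iff (x : G) : Abelianization.of x = 1 ↔ x ∈ commutator G :=
  QuotientGroup.eq_one_iff x

lemma of_surj : Function.Surjective (Abelianization.of : G → Abelianization G) :=
  fun y => Quotient.exists_rep y

lemma commLength_le {x : G} {k : ℕ}
    (h : ∃ a b : Fin k → G, x = (List.ofFn (fun i => ⁅a i, b i⁆)).prod) :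
    commLength x ≤ k := Nat.sInf_le h

lemma exists_of_commLength_le {x : G} {B : ℕ} (hx : x ∈ commutator G)
    (h : commLength x ≤ B) :
    ∃ a b : Fin B → G, x = (List.ofFn (fun i => ⁅a i, b i⁆)).prod := by
  obtain ⟨k, hk⟩ := (mem_commutator_iff_exists x).mp hx
  have hne : {k : ℕ | ∃ a b : Fin k → G, x = (List.ofFn (fun i => ⁅a i, b i⁆)).prod}.Nonempty :=
    ⟨k, hk⟩
  have hmem := Nat.sInf_mem hne
  exact prodComm_mono x h hmem

end Main

/-- The natural map `Ab(G^ℕ) → Ab(G)^ℕ` is an isomorphism iff `G` has finite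
commutator width. -/
theorem stmt_11 (G : Type) [Group G] :
    Function.Bijective (abPowToPowAb G) ↔
      ∃ B : ℕ, ∀ x ∈ commutator G, commLength x ≤ B := by
  have hsurj : Function.Surjective (abPowToPowAb G) := by
    intro c
    refine ⟨Abelianization.of (fun n => (of_surj (c n)).choose), ?_⟩
    show (abPowToPowAb G) (Abelianization.of _) = c
    rw [abPowToPowAb, Abelianization.lift_apply_of]
    funext n
    exact (of_surj (c n)).choose_spec
  have hcomp : ∀ x : ℕ → G, abPowToPowAb G (Abelianization.of x) =
      fun n => Abelianization.of (x n) := by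
    intro x
    rw [abPowToPowAb, Abelianization.lift_apply_of]
    rfl
  constructor
  · rintro ⟨hinj, -⟩
    by_contra hB
    push_neg at hB
    have hx : ∀ n : ℕ, ∃ x ∈ commutator G, n < commLength x := fun n => hB n
    set x : ℕ → G := fun n => (hx n).choose with hxdef
    have hx1 : ∀ n, x n ∈ commutator G := fun n => (hx n).choose_spec.1
    have hx2 : ∀ n, n < commLength (x n) := fun n => (hx n).choose_spec.2
    have h1 : abPowToPowAb G (Abelianization.of x) = 1 := by
      rw [hcomp]
      funext n
      exact (of_eq_one_iff (x n)).mpr (hx1 n)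
    have h2 : Abelianization.of x = 1 := by
      apply (injective_iff_map_eq_one (abPowToPowAb G)).mp hinj
      exact h1
    have h3 : x ∈ commutator (ℕ → G) := (of_eq_one_iff x).mp h2
    obtain ⟨k, a, b, hab⟩ := (mem_commutator_iff_exists x).mp h3
    have h4 : commLength (x k) ≤ k := by
      apply commLength_le
      refine ⟨fun i => a i k, fun i => b i k, ?_⟩
      have := congrFun hab k
      rw [this]
      rw [Pi.list_prod_apply]  -- ?
      congr 1
      rw [List.map_ofFn]
      rfl
    exact absurd h4 (not_le.mpr (hx2 k))
  · rintro ⟨B, hB⟩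
    refine ⟨?_, hsurj⟩
    apply (injective_iff_map_eq_one (abPowToPowAb G)).mpr
    intro y hy
    obtain ⟨x, rfl⟩ := of_surj y
    rw [hcomp] at hy
    have hx : ∀ n, x n ∈ commutator G := by
      intro n
      rw [← of_eq_one_iff]
      exact congrFun hy n
    have hrep : ∀ n, ∃ a b : Fin B → G,
        x n = (List.ofFn (fun i => ⁅a i, b i⁆)).prod := fun n =>
      exists_of_commLength_le (hx n) (hB _ (hx n))
    rw [of_eq_one_iff]
    rw [mem_commutator_iff_exists]
    refine ⟨B, fun i n => (hrep n).choose i, fun i n => (hrep n).choose_spec.choose i, ?_⟩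
    funext n
    rw [(hrep n).choose_spec.choose_spec]
    rw [Pi.list_prod_apply]
    congr 1
    rw [List.map_ofFn]
    rfl
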